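/- Fix β_NL ∈ ℝ and a probability density P_A on ℝ satisfying P_A(−x) = exp(−2 β_NL x) P_A(x) for all x ∈ ℝ. Then for every measurable even function f : ℝ → ℝ with f ≥ 0 (assuming the integrals below are finite), one has ∫_ℝ [ −x f(x) tanh(β x) − x f(x)(1 − e^{−β_NL x}) / sinh(2β x) ] P_A(x) dx = ∫_ℝ (−x f(x) tanh(β x)) P_A(x) dx − ∫_0^∞ P_A(x) · x f(x) · e^{−2β_NL x} (1 − e^{β_NL x})² / sinh(2β x) dx, and consequently ∫_ℝ [ −x f(x) tanh(β x) − x f(x)(1 − e^{−β_NL x}) / sinh(2β x) ] P_A(x) dx ≤ ∫_ℝ (−x f(x) tanh(β x)) P_A(x) dx. -/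

import Mathlib

open MeasureTheory Real

/-- Rewriting the right-hand side of the asymmetric lower bound: if
`P_A(-x) = exp(-2 β_NL x) P_A(x)`, then for every nonnegative measurable even `f`,
`∫ [-x f(x) tanh(βx) - x f(x)(1 - e^{-β_NL x})/sinh(2βx)] P_A(x) dx
  = ∫ -x f(x) tanh(βx) P_A(x) dx
    - ∫_{0}^{∞} P_A(x) x f(x) e^{-2β_NL x} (1 - e^{β_NL x})² / sinh(2βx) dx`,
and consequently the left-hand side is at most `∫ -x f(x) tanh(βx) P_A(x) dx`.
(The first integrand is extended continuously, by the value `0`, at `x = 0`.) -/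
theorem asymmetric_bound_correction_term
    (β : ℝ) (hβ : 0 < β) (βNL : ℝ)
    (P : ℝ → ℝ) (hPmeas : Measurable P) (hPnonneg : ∀ x, 0 ≤ P x)
    (hPone : ∫ x, P x = 1)
    (hPasym : ∀ x : ℝ, P (-x) = Real.exp (-2 * βNL * x) * P x)
    (f : ℝ → ℝ) (hfmeas : Measurable f) (hfeven : ∀ x, f (-x) = f x)
    (hfnonneg : ∀ x, 0 ≤ f x)
    -- the left-hand-side integrand, extended continuously to `x = 0`
    (g : ℝ → ℝ) (hg0 : g 0 = 0)
    (hg : ∀ x : ℝ, x ≠ 0 → g x = -x * f x * Real.tanh (β * x)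
        - x * f x * (1 - Real.exp (-(βNL * x))) / Real.sinh (2 * β * x))
    -- finiteness of the integrals
    (hint1 : Integrable (fun x => g x * P x))
    (hint2 : Integrable (fun x => -x * f x * Real.tanh (β * x) * P x))
    (hint3 : IntegrableOn
      (fun x => P x * (x * f x) * (Real.exp (-2 * βNL * x) * (1 - Real.exp (βNL * x)) ^ 2
        / Real.sinh (2 * β * x))) (Set.Ioi (0 : ℝ))) :
    (∫ x, g x * P x)
        = (∫ x, -x * f x * Real.tanh (β * x) * P x)
          - ∫ x in Set.Ioi (0 : ℝ),
              P x * (x * f x) * (Real.exp (-2 * βNL * x) * (1 - Real.exp (βNL * x)) ^ 2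
                / Real.sinh (2 * β * x))
      ∧ (∫ x, g x * P x) ≤ ∫ x, -x * f x * Real.tanh (β * x) * P x := by
  set corr : ℝ → ℝ := fun x =>
    P x * (x * f x) * (Real.exp (-2 * βNL * x) * (1 - Real.exp (βNL * x)) ^ 2
      / Real.sinh (2 * β * x)) with hcorr
  set h : ℝ → ℝ := fun x => g x * P x - -x * f x * Real.tanh (β * x) * P x with hh
  have hInt : Integrable h := hint1.sub hint2
  -- pointwise identity on the positive half-line
  have hkey : ∀ x ∈ Set.Ioi (0 : ℝ), h x + h (-x) = -corr x := by
    intro x hx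
    have hx0 : (0 : ℝ) < x := hx
    have hsinh : Real.sinh (2 * β * x) ≠ 0 := by
      have : (0 : ℝ) < 2 * β * x := by positivity
      exact ne_of_gt (Real.sinh_pos_iff.mpr this)
    have hg1 := hg x hx0.ne'
    have hg2 := hg (-x) (by simpa using hx0.ne')
    simp only [hh, hcorr, hg1, hg2, hPasym x, hfeven x, neg_neg, mul_neg, neg_mul]
    simp only [Real.sinh_neg, Real.tanh_neg]
    have huv : Real.exp (-(βNL * x)) * Real.exp (βNL * x) = 1 := by
      rw [← Real.exp_add]; simp
    have h2 : Real.exp (-2 * βNL * x) = Real.exp (-(βNL * x)) ^ 2 := by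
      rw [← Real.exp_nat_mul]; ring_nf
    have h2' : Real.exp (-(2 * βNL * x)) = Real.exp (-(βNL * x)) ^ 2 := by
      rw [← Real.exp_nat_mul]; ring_nf
    rw [h2']
    field_simp
    have huv' : Real.exp (-(x * βNL)) * Real.exp (x * βNL) = 1 := by rw [mul_comm x βNL]; exact huv
    linear_combination (f x * P x * (Real.exp (-(x * βNL)) * Real.exp (x * βNL) + 1 - Real.exp (-(x * βNL)))) * huv'
  -- integral identity
  have hIntNeg : Integrable (fun x => h (-x)) := hInt.comp_neg
  have hIoi : IntegrableOn h (Set.Ioi (0 : ℝ)) := hInt.integrableOn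
  have hIoiNeg : IntegrableOn (fun x => h (-x)) (Set.Ioi (0 : ℝ)) := hIntNeg.integrableOn
  have hsplit : ∫ x, h x = (∫ x in Set.Iic (0 : ℝ), h x) + ∫ x in Set.Ioi (0 : ℝ), h x :=
    (intervalIntegral.integral_Iic_add_Ioi hInt.integrableOn hInt.integrableOn).symm
  have hneg : (∫ x in Set.Iic (0 : ℝ), h x) = ∫ x in Set.Ioi (0 : ℝ), h (-x) := by
    rw [integral_comp_neg_Ioi 0 h, neg_zero]
  have hsum : ∫ x, h x = ∫ x in Set.Ioi (0 : ℝ), (h x + h (-x)) := by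
    rw [hsplit, hneg, ← integral_add hIoiNeg hIoi]
    congr 1; ext x; ring
  have hcorrInt : ∫ x, h x = - ∫ x in Set.Ioi (0 : ℝ), corr x := by
    rw [hsum, ← integral_neg]
    exact setIntegral_congr_fun measurableSet_Ioi hkey
  have hhx : ∫ x, h x = (∫ x, g x * P x) - ∫ x, -x * f x * Real.tanh (β * x) * P x :=
    integral_sub hint1 hint2
  have hmain : (∫ x, g x * P x)
      = (∫ x, -x * f x * Real.tanh (β * x) * P x) - ∫ x in Set.Ioi (0 : ℝ), corr x := by
    linarith [hhx, hcorrInt]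
  refine ⟨hmain, ?_⟩
  have hnn : 0 ≤ ∫ x in Set.Ioi (0 : ℝ), corr x := by
    apply setIntegral_nonneg measurableSet_Ioi
    intro x hx
    have hx0 : (0 : ℝ) < x := hx
    have hs : 0 < Real.sinh (2 * β * x) := Real.sinh_pos_iff.mpr (by positivity)
    have : 0 ≤ Real.exp (-2 * βNL * x) * (1 - Real.exp (βNL * x)) ^ 2
        / Real.sinh (2 * β * x) := by positivity
    exact mul_nonneg (mul_nonneg (hPnonneg x) (mul_nonneg hx0.le (hfnonneg x))) this
  linarith [hmain]
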